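/- Let {f_t : t ∈ T} be a family of functions on ℝⁿ with pointwise supremum f, such that f** = sup_{t∈T} f_t**, and let x ∈ ℝⁿ. If ε > inf_{y∈ℝⁿ} ( f*(y) + f(x) − ⟨y,x⟩ ), then ∂_ε f(x) = cl{ Σ_{t∈supp λ} λ_t y_t : λ ∈ Δ(T), η_t ≥ 0, y_t ∈ ∂_{η_t} f_t(x) for t ∈ supp λ, Σ_t λ_t η_t ∈ [0,ε), and Σ_t λ_t f_t(x) > f(x) + Σ_t λ_t η_t − ε }. Consequently, for every ε ≥ 0, ∂_ε f(x) = ∩_{γ>ε} cl{ Σ_{t∈supp λ} λ_t y_t : λ ∈ Δ(T), η_t ≥ 0, y_t ∈ ∂_{η_t} f_t(x) for t ∈ supp λ, Σ_t λ_t η_t ∈ [0,γ), and Σ_t λ_t f_t(x) ≥ f(x) + Σ_t λ_t η_t − γ }. Moreover, in both formulas it suffices to consider λ ∈ Δ(T) with #supp λ ≤ min{n+1, #T}. -/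

import Mathlib

open scoped RealInnerProductSpace Pointwise
open Set Filter

noncomputable section

/-- `En n` is the Euclidean space `ℝⁿ`. -/
abbrev En (n : ℕ) := EuclideanSpace ℝ (Fin n)

/-- The epigraph of an extended-real-valued function. -/
def epiS {n : ℕ} (g : En n → EReal) : Set (En n × ℝ) := {p | g p.1 ≤ (p.2 : EReal)}

/-- The Fenchel conjugate `g*`. -/
def conjF {n : ℕ} (g : En n → EReal) (y : En n) : EReal :=
  ⨆ x, (⟪y, x⟫ : EReal) - g x

/-- The effective domain of `g`. -/
def dm {n : ℕ} (g : En n → EReal) : Set (En n) := {x | g x < ⊤}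

/-- `g` is proper: never `-∞` and not identically `+∞`. -/
def ProperF {n : ℕ} (g : En n → EReal) : Prop := (∃ x, g x < ⊤) ∧ ∀ x, ⊥ < g x

/-- The ε-subdifferential `∂_ε g(x)` (empty when `g x` is not finite). -/
def eSub {n : ℕ} (g : En n → EReal) (ε : ℝ) (x : En n) : Set (En n) :=
  {y | ∃ r : ℝ, g x = (r : EReal) ∧ ∀ z, ((⟪y, z - x⟫ + r - ε : ℝ) : EReal) ≤ g z}

/-- The indicator function `δ_A` (0 on `A`, `+∞` outside). -/
def indE {n : ℕ} (A : Set (En n)) (x : En n) : EReal :=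
  Set.indicator Aᶜ (fun _ => (⊤ : EReal)) x

/-- The ε-normal set `N^ε_A(x) = ∂_ε δ_A(x)`. -/
def eNormal {n : ℕ} (A : Set (En n)) (ε : ℝ) (x : En n) : Set (En n) :=
  eSub (indE A) ε x

/-- `Γ₀`: proper, lower semicontinuous, convex. -/
def Gamma0 {n : ℕ} (g : En n → EReal) : Prop :=
  ProperF g ∧ LowerSemicontinuous g ∧ Convex ℝ (epiS g)

/-- Epi-pointed: `g*` is proper with nonempty interior of its domain. -/
def EpiPointed {n : ℕ} (g : En n → EReal) : Prop :=
  ProperF (conjF g) ∧ (interior (dm (conjF g))).Nonempty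

/-- The closed convex hull `c̄o g`: the function whose epigraph is the closed
convex hull of `epi g`. -/
def cchF {n : ℕ} (g : En n → EReal) (x : En n) : EReal :=
  sInf ((fun r : ℝ => (r : EReal)) '' {r | (x, r) ∈ closure (convexHull ℝ (epiS g))})

/-- The convex hull `co g`: the function whose epigraph is the convex hull of `epi g`. -/
def coF {n : ℕ} (g : En n → EReal) (x : En n) : EReal :=
  sInf ((fun r : ℝ => (r : EReal)) '' {r | (x, r) ∈ convexHull ℝ (epiS g)})

/-- Membership in the generalized simplex `Δ(T)`. -/
def inSimplex {T : Type*} (l : T →₀ ℝ) : Prop :=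
  (∀ t, 0 ≤ l t ∧ l t ≤ 1) ∧ (∑ t ∈ l.support, l t) = 1

/-- Membership in `Δ^ε(T)`. -/
def inDelta {T : Type*} (ε : ℝ) (e : T →₀ ℝ) : Prop :=
  (∀ t, 0 ≤ e t ∧ e t ≤ ε) ∧ (∑ t ∈ e.support, e t) = ε

end

section Helpers

lemma ereal_cases (x : EReal) : x = ⊥ ∨ (∃ r : ℝ, x = r) ∨ x = ⊤ := by
  induction x using EReal.rec
  · exact Or.inl rfl
  · exact Or.inr (Or.inl ⟨_, rfl⟩)
  · exact Or.inr (Or.inr rfl)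

lemma coe_sub_swap {a : ℝ} {B C : EReal} (h : (a : EReal) - C ≤ B) : (a : EReal) - B ≤ C := by
  rcases ereal_cases C with hC | ⟨c, hC⟩ | hC
  · subst hC
    have : B = ⊤ := top_le_iff.mp (by simpa using h)
    subst this; simp
  · subst hC
    rcases ereal_cases B with hB | ⟨b, hB⟩ | hB
    · subst hB
      exfalso
      simp only [le_bot_iff] at h
      rw [← EReal.coe_sub] at h
      exact EReal.coe_ne_bot _ h
    · subst hB
      rw [← EReal.coe_sub] at h ⊢
      rw [EReal.coe_le_coe_iff] at h ⊢
      linarith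
    · subst hB; simp
  · subst hC; simp

lemma sub_le_of_coe_le {a c : ℝ} {b : EReal} (h : (a : EReal) ≤ b) :
    (c : EReal) - b ≤ ((c - a : ℝ) : EReal) := by
  have := coe_sub_swap (a := c) (C := ((c - a : ℝ) : EReal)) (B := b) ?_
  · exact this
  · rw [← EReal.coe_sub]
    have : (c - (c - a) : ℝ) = a := by ring
    rw [this]; exact h

lemma coe_sub_le_rev {c d : ℝ} {b : EReal} (h : (c : EReal) - b ≤ (d : EReal)) :
    ((c - d : ℝ) : EReal) ≤ b := by
  have := coe_sub_swap h
  rwa [← EReal.coe_sub] at this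

lemma young {n : ℕ} (g : En n → EReal) (y z : En n) :
    (⟪y, z⟫ : EReal) - g z ≤ conjF g y := le_iSup (fun w => (⟪y, w⟫ : EReal) - g w) z

lemma conjF_le_iff {n : ℕ} {g : En n → EReal} {y : En n} {d : ℝ} :
    conjF g y ≤ (d : EReal) ↔ ∀ z, ((⟪y, z⟫ - d : ℝ) : EReal) ≤ g z := by
  constructor
  · intro h z
    exact coe_sub_le_rev ((young g y z).trans h)
  · intro h
    refine iSup_le fun z => ?_
    have h2 : ((⟪y, z⟫ : ℝ) : EReal) - (d : EReal) ≤ g z := by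
      rw [← EReal.coe_sub]; exact h z
    exact coe_sub_swap h2

lemma mem_eSub_iff {n : ℕ} {g : En n → EReal} {ε : ℝ} {x y : En n} :
    y ∈ eSub g ε x ↔ ∃ r : ℝ, g x = (r : EReal) ∧
      conjF g y ≤ ((⟪y, x⟫ - r + ε : ℝ) : EReal) := by
  constructor
  · rintro ⟨r, hr, h⟩
    refine ⟨r, hr, conjF_le_iff.mpr fun z => ?_⟩
    have := h z
    rw [inner_sub_right] at this
    have e : (⟪y, z⟫ - ⟪y, x⟫ + r - ε : ℝ) = (⟪y, z⟫ - (⟪y, x⟫ - r + ε) : ℝ) := by ring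
    rwa [e] at this
  · rintro ⟨r, hr, h⟩
    refine ⟨r, hr, fun z => ?_⟩
    have := conjF_le_iff.mp h z
    rw [inner_sub_right]
    have e : (⟪y, z⟫ - (⟪y, x⟫ - r + ε) : ℝ) = (⟪y, z⟫ - ⟪y, x⟫ + r - ε : ℝ) := by ring
    rwa [e] at this

lemma biconj_le {n : ℕ} (g : En n → EReal) (w : En n) : conjF (conjF g) w ≤ g w := by
  refine iSup_le fun y => ?_
  have h : ((⟪w, y⟫ : ℝ) : EReal) - g w ≤ conjF g y := by
    have := young g y w
    rwa [real_inner_comm] at this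
  exact coe_sub_swap h

lemma conjF_anti {n : ℕ} {g h : En n → EReal} (H : ∀ z, g z ≤ h z) (y : En n) :
    conjF h y ≤ conjF g y :=
  iSup_mono fun z => EReal.sub_le_sub le_rfl (H z)

lemma triple_conj {n : ℕ} (g : En n → EReal) (y : En n) :
    conjF (conjF (conjF g)) y = conjF g y :=
  le_antisymm (biconj_le (conjF g) y) (conjF_anti (fun z => biconj_le g z) y)

lemma coe_sub_iInf {ι : Sort*} (a : ℝ) (b : ι → EReal) :
    (a : EReal) - ⨅ t, b t = ⨆ t, ((a : EReal) - b t) := by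
  refine le_antisymm ?_ (iSup_le fun t => EReal.sub_le_sub le_rfl (iInf_le b t))
  refine coe_sub_swap (le_iInf fun t => ?_)
  exact coe_sub_swap (le_iSup (fun t => (a : EReal) - b t) t)

lemma conjF_iInf {n : ℕ} {T : Sort*} (h : T → En n → EReal) (y : En n) :
    conjF (fun p => ⨅ t, h t p) y = ⨆ t, conjF (h t) y := by
  unfold conjF
  calc (⨆ p, ((⟪y, p⟫ : ℝ) : EReal) - ⨅ t, h t p)
      = ⨆ p, ⨆ t, (((⟪y, p⟫ : ℝ) : EReal) - h t p) := by
        refine iSup_congr fun p => coe_sub_iInf _ _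
    _ = ⨆ t, ⨆ p, (((⟪y, p⟫ : ℝ) : EReal) - h t p) := iSup_comm


end Helpers

/-- The set of convex combinations `Σ_{t ∈ supp λ} λ_t y_t` with `λ ∈ Δ(T)`,
`η_t ≥ 0`, `y_t ∈ ∂_{η_t} f_t(x)` for `t ∈ supp λ`, `Σ λ_t η_t ∈ [0, γ)` and
`Σ λ_t f_t(x) > (resp. ≥) f(x) + Σ λ_t η_t − γ`; when `restricted = true` the
support of `λ` is required to have at most `min (n+1) (#T)` elements. -/
def Dset {n : ℕ} {T : Type*} (f : T → En n → EReal) (x : En n) (γ : ℝ)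
    (strict : Bool) (restricted : Bool) : Set (En n) :=
  {v | ∃ (l : T →₀ ℝ) (η : T → ℝ) (ys : T → En n),
    inSimplex l ∧
    (restricted = true → (l.support.card : ℕ∞) ≤ min ((n : ℕ∞) + 1) (ENat.card T)) ∧
    (∀ t, 0 ≤ η t) ∧
    (∀ t ∈ l.support, ys t ∈ eSub (f t) (η t) x) ∧
    (0 ≤ ∑ t ∈ l.support, l t * η t) ∧ (∑ t ∈ l.support, l t * η t) < γ ∧
    (if strict = true then
       (⨆ s, f s x) + (((∑ t ∈ l.support, l t * η t) - γ : ℝ) : EReal) <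
         ∑ t ∈ l.support, (l t : EReal) * f t x
     else
       (⨆ s, f s x) + (((∑ t ∈ l.support, l t * η t) - γ : ℝ) : EReal) ≤
         ∑ t ∈ l.support, (l t : EReal) * f t x) ∧
    v = ∑ t ∈ l.support, l t • ys t}

section Chunk2

lemma coe_fsum {α : Type*} (s : Finset α) (f : α → ℝ) :
    ((∑ i ∈ s, f i : ℝ) : EReal) = ∑ i ∈ s, ((f i : EReal)) :=
  map_sum (⟨⟨(Real.toEReal), EReal.coe_zero⟩, EReal.coe_add⟩ : ℝ →+ EReal) f s

lemma eSub_mono {n : ℕ} {g : En n → EReal} {ε ε' : ℝ} (h : ε ≤ ε') (x : En n) :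
    eSub g ε x ⊆ eSub g ε' x := by
  rintro y ⟨r, hr, hy⟩
  exact ⟨r, hr, fun z => le_trans (EReal.coe_le_coe_iff.mpr (by linarith)) (hy z)⟩

lemma isClosed_eSub {n : ℕ} (g : En n → EReal) (ε : ℝ) (x : En n) :
    IsClosed (eSub g ε x) := by
  rcases ereal_cases (g x) with hx | ⟨r, hx⟩ | hx
  · convert isClosed_empty
    ext y; simp only [eSub, mem_setOf_eq, mem_empty_iff_false, iff_false]
    rintro ⟨r, hr, -⟩; rw [hx] at hr; exact EReal.coe_ne_bot _ hr.symm
  · have he : eSub g ε x = ⋂ z, {y | ((⟪y, z - x⟫ + r - ε : ℝ) : EReal) ≤ g z} := by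
      ext y
      constructor
      · rintro ⟨r', hr', h⟩
        have : r' = r := by
          rw [hx] at hr'; exact_mod_cast hr'.symm
        subst this
        exact mem_iInter.mpr h
      · intro h
        exact ⟨r, hx, fun z => mem_iInter.mp h z⟩
    rw [he]
    refine isClosed_iInter fun z => ?_
    rcases ereal_cases (g z) with hz | ⟨b, hz⟩ | hz
    · convert isClosed_empty
      ext y; simp only [mem_setOf_eq, hz, mem_empty_iff_false, iff_false]
      intro h
      exact EReal.coe_ne_bot _ (le_bot_iff.mp h)
    · have : {y : En n | ((⟪y, z - x⟫ + r - ε : ℝ) : EReal) ≤ g z}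
          = {y : En n | ⟪y, z - x⟫ ≤ b - r + ε} := by
        ext y; rw [hz, mem_setOf_eq, mem_setOf_eq, EReal.coe_le_coe_iff]
        constructor <;> intro <;> linarith
      rw [this]
      exact isClosed_le (Continuous.inner continuous_id continuous_const) continuous_const
    · convert isClosed_univ
      ext y; simp [hz]
  · convert isClosed_empty
    ext y; simp only [eSub, mem_setOf_eq, mem_empty_iff_false, iff_false]
    rintro ⟨r, hr, -⟩; rw [hx] at hr; exact EReal.coe_ne_top _ hr.symm

lemma eSub_of_forall_gt {n : ℕ} {g : En n → EReal} {ε : ℝ} {x y : En n}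
    (h : ∀ γ : ℝ, ε < γ → y ∈ eSub g γ x) : y ∈ eSub g ε x := by
  obtain ⟨r, hr, -⟩ := h (ε + 1) (by linarith)
  refine ⟨r, hr, fun z => ?_⟩
  rcases ereal_cases (g z) with hz | ⟨b, hz⟩ | hz
  · exfalso
    obtain ⟨r', hr', h2⟩ := h (ε + 1) (by linarith)
    have := (h2 z).trans_eq hz
    exact EReal.coe_ne_bot _ (le_bot_iff.mp this)
  · rw [hz, EReal.coe_le_coe_iff]
    by_contra hlt
    push_neg at hlt
    set γ : ℝ := ε + (⟪y, z - x⟫ + r - ε - b) / 2 with hγ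
    obtain ⟨r', hr', h2⟩ := h γ (by rw [hγ]; linarith)
    have hrr : r' = r := by
      rw [hr] at hr'; exact_mod_cast hr'.symm
    subst hrr
    have := h2 z
    rw [hz, EReal.coe_le_coe_iff] at this
    rw [hγ] at this
    linarith
  · simp [hz]

lemma finset_card_le_enat_card {T : Type*} (s : Finset T) : (s.card : ℕ∞) ≤ ENat.card T := by
  cases finite_or_infinite T
  · haveI : Fintype T := Fintype.ofFinite T
    rw [ENat.card_eq_coe_fintype_card]
    exact_mod_cast s.card_le_univ
  · rw [ENat.card_eq_top_of_infinite]
    exact le_top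

end Chunk2


section Chunk3

lemma Dset_mono_strict {n : ℕ} {T : Type*} (f : T → En n → EReal) (x : En n) (γ : ℝ)
    (rb : Bool) : Dset f x γ true rb ⊆ Dset f x γ false rb := by
  rintro v ⟨l, η, ys, h1, h2, h3, h4, h5, h6, h7, h8⟩
  refine ⟨l, η, ys, h1, h2, h3, h4, h5, h6, ?_, h8⟩
  rw [if_neg (by simp : ¬(false = true))]
  rw [if_pos rfl] at h7
  exact le_of_lt h7

lemma Dset_mono_restricted {n : ℕ} {T : Type*} (f : T → En n → EReal) (x : En n) (γ : ℝ)
    (st : Bool) : Dset f x γ st true ⊆ Dset f x γ st false := by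
  rintro v ⟨l, η, ys, h1, h2, h3, h4, h5, h6, h7, h8⟩
  exact ⟨l, η, ys, h1, fun h => absurd h (by simp), h3, h4, h5, h6, h7, h8⟩

lemma Dset_subset_eSub {n : ℕ} {T : Type*} (f : T → En n → EReal) (x : En n) (γ : ℝ)
    (st rb : Bool) : Dset f x γ st rb ⊆ eSub (fun w => ⨆ t, f t w) γ x := by
  rintro v ⟨l, η, ys, ⟨hbd, hone⟩, hrb, hη, hmem, hge, hlt, hcond, hv⟩
  have hcond' : (⨆ s, f s x) + (((∑ t ∈ l.support, l t * η t) - γ : ℝ) : EReal)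
      ≤ ∑ t ∈ l.support, (l t : EReal) * f t x := by
    rcases st with _ | _
    · rw [if_neg (by simp : ¬(false = true))] at hcond; exact hcond
    · rw [if_pos rfl] at hcond; exact le_of_lt hcond
  have hne : l.support.Nonempty :=
    Finset.nonempty_of_sum_ne_zero (by rw [hone]; exact one_ne_zero)
  set ρ : T → ℝ := fun t => (f t x).toReal with hρdef
  have hρ : ∀ t ∈ l.support, f t x = ((ρ t : ℝ) : EReal) := by
    intro t ht
    obtain ⟨r, hr, -⟩ := hmem t ht
    rw [hr]; simp [hρdef, hr]
  have hsum_eq : ∑ t ∈ l.support, (l t : EReal) * f t x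
      = ((∑ t ∈ l.support, l t * ρ t : ℝ) : EReal) := by
    rw [coe_fsum]
    refine Finset.sum_congr rfl fun t ht => ?_
    rw [hρ t ht, ← EReal.coe_mul]
  set S := ⨆ s, f s x with hS
  have hSne_top : S ≠ ⊤ := by
    intro h
    rw [h, hsum_eq, EReal.top_add_coe] at hcond'
    exact (EReal.coe_ne_top _) (top_le_iff.mp hcond')
  have hSne_bot : S ≠ ⊥ := by
    obtain ⟨t0, ht0⟩ := hne
    intro h
    have h2 := le_iSup (fun s => f s x) t0
    rw [← hS, h, le_bot_iff, hρ t0 ht0] at h2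
    exact EReal.coe_ne_bot _ h2
  set R := S.toReal with hR
  have hSR : S = (R : EReal) := (EReal.coe_toReal hSne_top hSne_bot).symm
  have hreal : R + ((∑ t ∈ l.support, l t * η t) - γ) ≤ ∑ t ∈ l.support, l t * ρ t := by
    rw [hSR, hsum_eq, ← EReal.coe_add, EReal.coe_le_coe_iff] at hcond'
    exact hcond'
  refine ⟨R, hSR, fun z => ?_⟩
  set a : T → ℝ := fun t => ⟪ys t, z - x⟫ + ρ t - η t with ha
  have hat : ∀ t ∈ l.support, ((a t : ℝ) : EReal) ≤ ⨆ s, f s z := by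
    intro t ht
    obtain ⟨r, hr, hineq⟩ := hmem t ht
    have hρt : ρ t = r := by rw [hρdef]; simp [hr]
    refine le_trans ?_ (le_iSup (fun s => f s z) t)
    have := hineq z
    simp only [ha, hρt]
    exact this
  set M := l.support.sup' hne a with hM
  have hM_le : ((M : ℝ) : EReal) ≤ ⨆ s, f s z := by
    obtain ⟨t, ht, hts⟩ := Finset.exists_mem_eq_sup' hne a
    rw [hM, hts]; exact hat t ht
  have hsum_le_M : ∑ t ∈ l.support, l t * a t ≤ M := by
    calc ∑ t ∈ l.support, l t * a t ≤ ∑ t ∈ l.support, l t * M :=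
          Finset.sum_le_sum fun t ht => mul_le_mul_of_nonneg_left (Finset.le_sup' a ht) (hbd t).1
      _ = M := by rw [← Finset.sum_mul, hone, one_mul]
  have hvsum : ⟪v, z - x⟫ = ∑ t ∈ l.support, l t * ⟪ys t, z - x⟫ := by
    rw [hv, sum_inner]
    exact Finset.sum_congr rfl fun t ht => real_inner_smul_left _ _ _
  have expand : ∑ t ∈ l.support, l t * a t
      = ⟪v, z - x⟫ + (∑ t ∈ l.support, l t * ρ t) - (∑ t ∈ l.support, l t * η t) := by
    have h1 : ∀ t ∈ l.support, l t * a t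
        = (l t * ⟪ys t, z - x⟫ + l t * ρ t) - l t * η t := fun t _ => by
      simp only [ha]; ring
    rw [Finset.sum_congr rfl h1, Finset.sum_sub_distrib, Finset.sum_add_distrib, hvsum]
  have key : ⟪v, z - x⟫ + R - γ ≤ M := by
    have := hsum_le_M
    rw [expand] at this
    linarith
  exact le_trans (EReal.coe_le_coe_iff.mpr key) hM_le

end Chunk3


section Chunk4

lemma carath_descent {n : ℕ} {ι : Type*} (p : ι → En n) (s : ι → ℝ) (I : Finset ι) :
    ∀ w : ι → ℝ, (∀ i ∈ I, 0 ≤ w i) → (∑ i ∈ I, w i = 1) →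
    ∃ (J : Finset ι) (w' : ι → ℝ), J ⊆ I ∧ J.card ≤ n + 1 ∧ (∀ i ∈ J, 0 ≤ w' i) ∧
      (∑ i ∈ J, w' i = 1) ∧ (∑ i ∈ J, w' i • p i = ∑ i ∈ I, w i • p i) ∧
      (∑ i ∈ J, w' i * s i ≤ ∑ i ∈ I, w i * s i) := by
  classical
  induction I using Finset.strongInduction with
  | _ I ih =>
    intro w hw hw1
    by_cases hsmall : I.card ≤ n + 1
    · exact ⟨I, w, Finset.Subset.refl I, hsmall, hw, hw1, rfl, le_refl _⟩
    · -- find i* ∈ I and new weights w'' vanishing at i*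
      have hstep : ∃ i₀ ∈ I, ∃ w'' : ι → ℝ, (∀ i ∈ I, 0 ≤ w'' i) ∧ w'' i₀ = 0 ∧
          (∑ i ∈ I, w'' i = 1) ∧ (∑ i ∈ I, w'' i • p i = ∑ i ∈ I, w i • p i) ∧
          (∑ i ∈ I, w'' i * s i ≤ ∑ i ∈ I, w i * s i) := by
        by_cases hzero : ∃ i₀ ∈ I, w i₀ = 0
        · obtain ⟨i₀, hi₀, hwi₀⟩ := hzero
          exact ⟨i₀, hi₀, w, hw, hwi₀, hw1, rfl, le_refl _⟩
        · push_neg at hzero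
          -- all weights positive; find a linear dependence
          have hcard2 : n + 1 < I.card := by omega
          have hnli : ¬ LinearIndependent ℝ (fun i : ↥I => ((p i, (1 : ℝ)) : En n × ℝ)) := by
            intro h
            have hle := h.fintype_card_le_finrank
            rw [Fintype.card_coe] at hle
            have hfr : Module.finrank ℝ (En n × ℝ) = n + 1 := by
              rw [Module.finrank_prod, finrank_euclideanSpace_fin, Module.finrank_self]
            omega
          obtain ⟨g, hg0, i₀, hgi₀⟩ := Fintype.not_linearIndependent_iff.mp hnli
          set c : ι → ℝ := fun i => if h : i ∈ I then g ⟨i, h⟩ else 0 with hc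
          have hcv : ∑ i ∈ I, c i • ((p i, (1 : ℝ)) : En n × ℝ) = 0 := by
            rw [← hg0, Finset.univ_eq_attach,
              ← Finset.sum_attach I (fun i => c i • ((p i, (1 : ℝ)) : En n × ℝ))]
            refine Finset.sum_congr rfl fun i _ => ?_
            simp [hc, i.2]
          have hsplit : ∑ i ∈ I, c i • ((p i, (1 : ℝ)) : En n × ℝ)
              = (∑ i ∈ I, c i • p i, ∑ i ∈ I, c i) := by
            rw [Prod.ext_iff]
            constructor
            · rw [Prod.fst_sum]; exact Finset.sum_congr rfl fun i _ => rfl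
            · rw [Prod.snd_sum]; simp [smul_eq_mul]
          rw [hsplit, Prod.mk_eq_zero] at hcv
          have hcp : ∑ i ∈ I, c i • p i = 0 := hcv.1
          have hcz : ∑ i ∈ I, c i = 0 := hcv.2
          have hci₀ : c (i₀ : ι) ≠ 0 := by
            simpa [hc, i₀.2] using hgi₀
          -- WLOG the cost direction is nonpositive
          obtain ⟨d, hds, hdz, hdp, hdi₀⟩ :
              ∃ d : ι → ℝ, (∑ i ∈ I, d i * s i ≤ 0) ∧ (∑ i ∈ I, d i = 0) ∧
                (∑ i ∈ I, d i • p i = 0) ∧ d (i₀ : ι) ≠ 0 := by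
            by_cases hcs : ∑ i ∈ I, c i * s i ≤ 0
            · exact ⟨c, hcs, hcz, hcp, hci₀⟩
            · refine ⟨fun i => -c i, ?_, ?_, ?_, by simpa using hci₀⟩
              · push_neg at hcs
                have h2 : ∑ i ∈ I, -c i * s i = -∑ i ∈ I, c i * s i := by
                  simp [neg_mul]
                rw [h2]; linarith
              · have h2 : ∑ i ∈ I, -c i = 0 := by
                  simp only [Finset.sum_neg_distrib, hcz, neg_zero]
                simpa using h2
              · have h2 : ∑ i ∈ I, (-c i) • p i = -∑ i ∈ I, c i • p i := by
                  simp [neg_smul]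
                rw [h2, hcp, neg_zero]
          -- find a negative coefficient
          set K := I.filter (fun i => d i < 0) with hK
          have hKne : K.Nonempty := by
            by_contra hKe
            rw [Finset.not_nonempty_iff_eq_empty] at hKe
            have hall : ∀ i ∈ I, 0 ≤ d i := by
              intro i hi
              by_contra hneg
              push_neg at hneg
              have : i ∈ K := by rw [hK, Finset.mem_filter]; exact ⟨hi, hneg⟩
              rw [hKe] at this
              exact absurd this (Finset.notMem_empty i)
            have := (Finset.sum_eq_zero_iff_of_nonneg hall).mp hdz (i₀ : ι) i₀.2
            exact hdi₀ this
          obtain ⟨istar, histarK, hminval⟩ :=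
            K.exists_min_image (fun i => w i / (-d i)) hKne
          have histarI : istar ∈ I := (Finset.mem_filter.mp histarK).1
          have hdneg : d istar < 0 := (Finset.mem_filter.mp histarK).2
          set θ := w istar / (-d istar) with hθ
          have hθ0 : 0 ≤ θ := div_nonneg (hw istar histarI) (by linarith)
          set w'' : ι → ℝ := fun i => w i + θ * d i with hw''
          have hdne : d istar ≠ 0 := ne_of_lt hdneg
          have h3 : w istar / -d istar * -d istar = w istar :=
            div_mul_cancel₀ _ (neg_ne_zero.mpr hdne)
          have hθd : θ * d istar = -w istar := by
            rw [hθ]; linear_combination -h3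
          have hw''istar : w'' istar = 0 := by
            simp only [hw'']
            rw [hθd]; ring
          have hw''nn : ∀ i ∈ I, 0 ≤ w'' i := by
            intro i hi
            simp only [hw'']
            rcases le_or_gt 0 (d i) with hd | hd
            · have := mul_nonneg hθ0 hd
              have := hw i hi
              linarith
            · have hiK : i ∈ K := Finset.mem_filter.mpr ⟨hi, hd⟩
              have this := hminval i hiK
              have h2 : θ * (-d i) ≤ w i := by
                rw [← le_div_iff₀ (by linarith : (0:ℝ) < -d i)]
                exact this
              linarith [h2]
          refine ⟨istar, histarI, w'', hw''nn, hw''istar, ?_, ?_, ?_⟩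
          · simp only [hw'']
            rw [Finset.sum_add_distrib, ← Finset.mul_sum, hdz, mul_zero, add_zero, hw1]
          · simp only [hw'']
            have h5 : ∀ i ∈ I, (w i + θ * d i) • p i = w i • p i + θ • (d i • p i) :=
              fun i _ => by rw [add_smul, smul_smul]
            rw [Finset.sum_congr rfl h5, Finset.sum_add_distrib, ← Finset.smul_sum, hdp,
              smul_zero, add_zero]
          · simp only [hw'']
            have h5 : ∀ i ∈ I, (w i + θ * d i) * s i = w i * s i + θ * (d i * s i) :=
              fun i _ => by ring
            rw [Finset.sum_congr rfl h5, Finset.sum_add_distrib, ← Finset.mul_sum]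
            nlinarith [mul_nonpos_of_nonneg_of_nonpos hθ0 hds]
      obtain ⟨i₀, hi₀, w'', hw''nn, hw''0, hw''1, hw''p, hw''s⟩ := hstep
      have herase : I.erase i₀ ⊂ I := Finset.erase_ssubset hi₀
      have hsum1 : ∑ i ∈ I.erase i₀, w'' i = 1 := by
        have := Finset.sum_erase_add I w'' hi₀
        rw [hw''0, add_zero] at this
        rw [this, hw''1]
      obtain ⟨J, w', hJsub, hJcard, hw'nn, hw'1, hw'p, hw's⟩ :=
        ih (I.erase i₀) herase w'' (fun i hi => hw''nn i (Finset.mem_of_mem_erase hi)) hsum1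
      refine ⟨J, w', hJsub.trans (Finset.erase_subset _ _), hJcard, hw'nn, hw'1, ?_, ?_⟩
      · rw [hw'p]
        have h4 := Finset.sum_erase_add I (fun i => w'' i • p i) hi₀
        simp only [hw''0, zero_smul, add_zero] at h4
        rw [h4, hw''p]
      · calc ∑ i ∈ J, w' i * s i ≤ ∑ i ∈ I.erase i₀, w'' i * s i := hw's
          _ = ∑ i ∈ I, w'' i * s i := by
              have h4 := Finset.sum_erase_add I (fun i => w'' i * s i) hi₀
              simp only [hw''0, zero_mul, add_zero] at h4
              exact h4
          _ ≤ ∑ i ∈ I, w i * s i := hw''s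

end Chunk4


section Chunk5

lemma comb_mem_Dset {n : ℕ} {T : Type*} (f : T → En n → EReal) (x : En n) (γ R : ℝ)
    {ι : Type*} (I : Finset ι) (w : ι → ℝ) (τ : ι → T) (p : ι → En n) (η : ι → ℝ) (ρ : ι → ℝ)
    (hwpos : ∀ i ∈ I, 0 < w i) (hw1 : ∑ i ∈ I, w i = 1)
    (hcard : I.card ≤ n + 1)
    (hη : ∀ i ∈ I, 0 ≤ η i)
    (hmem : ∀ i ∈ I, p i ∈ eSub (f (τ i)) (η i) x)
    (hρ : ∀ i ∈ I, f (τ i) x = ((ρ i : ℝ) : EReal))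
    (hS : (⨆ s, f s x) = ((R : ℝ) : EReal))
    (hB : R + (∑ i ∈ I, w i * η i) - γ < ∑ i ∈ I, w i * ρ i) :
    (∑ i ∈ I, w i • p i) ∈ Dset f x γ true true := by
  classical
  have hwnn : ∀ i ∈ I, 0 ≤ w i := fun i hi => le_of_lt (hwpos i hi)
  have hρR : ∀ i ∈ I, ρ i ≤ R := by
    intro i hi
    have h1 : f (τ i) x ≤ ⨆ s, f s x := le_iSup (fun s => f s x) (τ i)
    rw [hρ i hi, hS, EReal.coe_le_coe_iff] at h1
    exact h1
  have hA : ∑ i ∈ I, w i * η i < γ := by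
    have h1 : ∑ i ∈ I, w i * ρ i ≤ ∑ i ∈ I, w i * R :=
      Finset.sum_le_sum fun i hi => mul_le_mul_of_nonneg_left (hρR i hi) (hwnn i hi)
    rw [← Finset.sum_mul, hw1, one_mul] at h1
    linarith
  set l : T →₀ ℝ := ∑ i ∈ I, Finsupp.single (τ i) (w i) with hldef
  have hl : ∀ t, l t = ∑ i ∈ I.filter (fun i => τ i = t), w i := by
    intro t
    rw [hldef, Finsupp.finset_sum_apply, Finset.sum_filter]
    exact Finset.sum_congr rfl fun i _ => Finsupp.single_apply
  have hlnn : ∀ t, 0 ≤ l t := fun t => by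
    rw [hl t]
    exact Finset.sum_nonneg fun i hi => hwnn i (Finset.mem_of_mem_filter i hi)
  have hlpos : ∀ t ∈ I.image τ, 0 < l t := by
    intro t ht
    obtain ⟨i₀, hi₀, hτ⟩ := Finset.mem_image.mp ht
    rw [hl t]
    refine Finset.sum_pos' (fun i hi => hwnn i (Finset.mem_of_mem_filter i hi)) ?_
    exact ⟨i₀, Finset.mem_filter.mpr ⟨hi₀, hτ⟩, hwpos i₀ hi₀⟩
  have hsupp : l.support = I.image τ := by
    ext t
    constructor
    · intro ht
      by_contra hmem'
      have hz : l t = 0 := by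
        rw [hl t]
        refine Finset.sum_eq_zero fun i hi => ?_
        exfalso
        obtain ⟨hi1, hi2⟩ := Finset.mem_filter.mp hi
        exact hmem' (Finset.mem_image.mpr ⟨i, hi1, hi2⟩)
      exact Finsupp.mem_support_iff.mp ht hz
    · intro ht
      exact Finsupp.mem_support_iff.mpr (ne_of_gt (hlpos t ht))
  have fiber : ∀ {M : Type} [AddCommMonoid M], ∀ g : ι → M,
      ∑ t ∈ I.image τ, ∑ i ∈ I.filter (fun i => τ i = t), g i = ∑ i ∈ I, g i := by
    intro M _ g
    exact Finset.sum_fiberwise_of_maps_to (fun i hi => Finset.mem_image_of_mem τ hi) g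
  have hsum1 : ∑ t ∈ l.support, l t = 1 := by
    rw [hsupp, Finset.sum_congr rfl fun t _ => hl t, fiber w, hw1]
  have hρconst : ∀ t, ∀ i ∈ I.filter (fun i => τ i = t), ∀ j ∈ I.filter (fun j => τ j = t),
      ρ i = ρ j := by
    intro t i hi j hj
    obtain ⟨hi1, hi2⟩ := Finset.mem_filter.mp hi
    obtain ⟨hj1, hj2⟩ := Finset.mem_filter.mp hj
    have h1 := hρ i hi1
    have h2 := hρ j hj1
    rw [hi2] at h1; rw [hj2] at h2
    rw [h1] at h2
    exact_mod_cast h2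
  set ys : T → En n := fun t => (l t)⁻¹ • ∑ i ∈ I.filter (fun i => τ i = t), w i • p i with hys
  set ηf : T → ℝ := fun t => (l t)⁻¹ * ∑ i ∈ I.filter (fun i => τ i = t), w i * η i with hηf
  have hηfnn : ∀ t, 0 ≤ ηf t := by
    intro t
    simp only [hηf]
    refine mul_nonneg (inv_nonneg.mpr (hlnn t)) (Finset.sum_nonneg fun i hi => ?_)
    exact mul_nonneg (hwnn i (Finset.mem_of_mem_filter i hi))
      (hη i (Finset.mem_of_mem_filter i hi))
  have hle1 : ∀ t, l t ≤ 1 := by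
    intro t
    rw [hl t, ← hw1]
    exact Finset.sum_le_sum_of_subset_of_nonneg (Finset.filter_subset _ _)
      (fun i hi _ => hwnn i hi)
  have he : ∑ t ∈ l.support, l t * ηf t = ∑ i ∈ I, w i * η i := by
    rw [hsupp, ← fiber (fun i => w i * η i)]
    refine Finset.sum_congr rfl fun t ht => ?_
    simp only [hηf]
    exact mul_inv_cancel_left₀ (ne_of_gt (hlpos t ht)) _
  have hRHS : ∑ t ∈ l.support, (l t : EReal) * f t x
      = ((∑ i ∈ I, w i * ρ i : ℝ) : EReal) := by
    rw [← fiber (fun i => w i * ρ i), coe_fsum, hsupp]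
    refine Finset.sum_congr rfl fun t ht => ?_
    obtain ⟨i₀, hi₀, hτ₀⟩ := Finset.mem_image.mp ht
    have hfx : f t x = ((ρ i₀ : ℝ) : EReal) := by rw [← hτ₀]; exact hρ i₀ hi₀
    have hfib : ∑ i ∈ I.filter (fun i => τ i = t), w i * ρ i = l t * ρ i₀ := by
      rw [hl t, Finset.sum_mul]
      exact Finset.sum_congr rfl fun i hi => by
        rw [hρconst t i hi i₀ (Finset.mem_filter.mpr ⟨hi₀, hτ₀⟩)]
    rw [hfib, hfx, ← EReal.coe_mul]
  refine ⟨l, ηf, ys, ⟨fun t => ⟨hlnn t, hle1 t⟩, hsum1⟩, ?_, hηfnn, ?_, ?_, ?_, ?_, ?_⟩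
  · intro _
    refine le_min ?_ (finset_card_le_enat_card _)
    rw [hsupp]
    have h1 : (I.image τ).card ≤ n + 1 := le_trans Finset.card_image_le hcard
    have h2 : ((n : ℕ∞) + 1) = ((n + 1 : ℕ) : ℕ∞) := by push_cast; ring
    rw [h2]
    exact_mod_cast h1
  · intro t ht
    rw [hsupp] at ht
    obtain ⟨i₀, hi₀, hτ₀⟩ := Finset.mem_image.mp ht
    have hfibne : (I.filter (fun i => τ i = t)).Nonempty :=
      ⟨i₀, Finset.mem_filter.mpr ⟨hi₀, hτ₀⟩⟩
    have hlt : 0 < l t := hlpos t ht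
    refine ⟨ρ i₀, by rw [← hτ₀]; exact hρ i₀ hi₀, fun z => ?_⟩
    set a : ι → ℝ := fun i => ⟪p i, z - x⟫ + ρ i₀ - η i with ha
    have hai : ∀ i ∈ I.filter (fun i => τ i = t), ((a i : ℝ) : EReal) ≤ f t z := by
      intro i hi
      obtain ⟨hi1, hi2⟩ := Finset.mem_filter.mp hi
      obtain ⟨r, hr, hineq⟩ := hmem i hi1
      have hri : r = ρ i := by
        have h3 := hρ i hi1
        rw [hr] at h3
        exact_mod_cast h3
      have hρeq : ρ i = ρ i₀ := hρconst t i hi i₀ (Finset.mem_filter.mpr ⟨hi₀, hτ₀⟩)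
      have h4 := hineq z
      rw [hi2] at h4
      simp only [ha]
      rw [← hρeq, ← hri]
      exact h4
    have hMle : (((I.filter (fun i => τ i = t)).sup' hfibne a : ℝ) : EReal) ≤ f t z := by
      obtain ⟨i, hi, hie⟩ := Finset.exists_mem_eq_sup' hfibne a
      rw [hie]
      exact hai i hi
    set M := (I.filter (fun i => τ i = t)).sup' hfibne a with hM
    have hll : (l t)⁻¹ * (l t) = 1 := inv_mul_cancel₀ (ne_of_gt hlt)
    have havg : ⟪ys t, z - x⟫ + ρ i₀ - ηf t
        = (l t)⁻¹ * ∑ i ∈ I.filter (fun i => τ i = t), w i * a i := by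
      have h1 : ⟪ys t, z - x⟫
          = (l t)⁻¹ * ∑ i ∈ I.filter (fun i => τ i = t), w i * ⟪p i, z - x⟫ := by
        simp only [hys]
        rw [real_inner_smul_left, sum_inner]
        congr 1
        exact Finset.sum_congr rfl fun i _ => real_inner_smul_left _ _ _
      have h2 : ∀ i ∈ I.filter (fun i => τ i = t),
          w i * a i = w i * ⟪p i, z - x⟫ + w i * ρ i₀ - w i * η i := fun i _ => by
        simp only [ha]; ring
      rw [Finset.sum_congr rfl h2, Finset.sum_sub_distrib, Finset.sum_add_distrib,
        ← Finset.sum_mul, ← hl t, h1]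
      simp only [hηf]
      linear_combination (-ρ i₀) * hll
    have hbound : (l t)⁻¹ * ∑ i ∈ I.filter (fun i => τ i = t), w i * a i ≤ M := by
      have h1 : ∑ i ∈ I.filter (fun i => τ i = t), w i * a i
          ≤ ∑ i ∈ I.filter (fun i => τ i = t), w i * M :=
        Finset.sum_le_sum fun i hi =>
          mul_le_mul_of_nonneg_left (Finset.le_sup' a hi)
            (hwnn i (Finset.mem_of_mem_filter i hi))
      rw [← Finset.sum_mul, ← hl t] at h1
      calc (l t)⁻¹ * ∑ i ∈ I.filter (fun i => τ i = t), w i * a i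
          ≤ (l t)⁻¹ * (l t * M) := mul_le_mul_of_nonneg_left h1 (inv_nonneg.mpr (hlnn t))
        _ = M := by rw [← mul_assoc, hll, one_mul]
    refine le_trans (EReal.coe_le_coe_iff.mpr ?_) hMle
    rw [havg]
    exact hbound
  · exact Finset.sum_nonneg fun t ht => mul_nonneg (hlnn t) (hηfnn t)
  · rw [he]; exact hA
  · rw [if_pos rfl, he, hRHS, hS, ← EReal.coe_add]
    exact EReal.coe_lt_coe_iff.mpr (by linarith)
  · rw [hsupp, ← fiber (fun i => w i • p i)]
    refine Finset.sum_congr rfl fun t ht => ?_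
    simp only [hys, smul_smul]
    rw [mul_inv_cancel₀ (ne_of_gt (hlpos t ht)), one_smul]

end Chunk5


section Chunk6

lemma separation_epi {n : ℕ} (H : En n → EReal) (x : En n) (r : ℝ)
    (hH : ∀ p, ((⟪p, x⟫ - r : ℝ) : EReal) ≤ H p)
    (y : En n) (c : ℝ) (hc : conjF (conjF H) y < (c : EReal)) :
    ((y, c) : En n × ℝ) ∈ closure (convexHull ℝ (epiS H)) := by
  by_contra hout
  have hepi_ne : (epiS H).Nonempty := by
    by_contra he
    rw [Set.not_nonempty_iff_eq_empty] at he
    have hHtop : ∀ p, H p = ⊤ := by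
      intro p
      by_contra hne
      rcases ereal_cases (H p) with h | ⟨b, h⟩ | h
      · exact Set.eq_empty_iff_forall_notMem.mp he (p, 0)
          (by simp only [epiS, Set.mem_setOf_eq, h]; exact bot_le)
      · exact Set.eq_empty_iff_forall_notMem.mp he (p, b)
          (by simp only [epiS, Set.mem_setOf_eq, h]; exact le_refl _)
      · exact hne h
    have h1 : conjF H = fun _ => (⊥ : EReal) := by
      funext z
      unfold conjF
      simp [hHtop]
    have h2 : (⊤ : EReal) ≤ conjF (conjF H) y := by
      have hr : conjF (conjF H) y = ⨆ w, (((⟪y, w⟫ : ℝ)) : EReal) - conjF H w := rfl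
      rw [hr, h1]
      refine le_trans (le_of_eq ?_) (le_iSup _ (0 : En n))
      simp
    rw [top_le_iff.mp h2] at hc
    exact absurd hc (by simp)
  obtain ⟨q₀, hq₀⟩ := hepi_ne
  set K := closure (convexHull ℝ (epiS H)) with hKdef
  have hKconv : Convex ℝ K := (convex_convexHull ℝ _).closure
  obtain ⟨φ, β, hφy, hφK⟩ := geometric_hahn_banach_point_closed hKconv isClosed_closure hout
  set u := (InnerProductSpace.toDual ℝ (En n)).symm
    (φ.comp (ContinuousLinearMap.inl ℝ (En n) ℝ)) with hu
  set ac := φ ((0 : En n), (1 : ℝ)) with hac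
  have hdec : ∀ (p : En n) (s : ℝ), φ (p, s) = ⟪u, p⟫ + s * ac := by
    intro p s
    have hsplit : ((p, s) : En n × ℝ) = (p, 0) + s • ((0 : En n), (1 : ℝ)) := by
      ext <;> simp
    rw [hsplit, map_add, map_smul]
    have h2 : (⟪u, p⟫ : ℝ) = φ (p, 0) := by
      rw [hu, InnerProductSpace.toDual_symm_apply]
      rfl
    rw [← h2, smul_eq_mul]
  have hepiK : ∀ q ∈ epiS H, β < φ q := fun q hq =>
    hφK q (subset_closure (subset_convexHull ℝ _ hq))
  have hpt : ⟪u, y⟫ + c * ac < β := by rw [← hdec]; exact hφy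
  rcases lt_trichotomy ac 0 with hneg | hzero | hpos
  · -- ac < 0 : vertical ray upward gives contradiction
    set C := ⟪u, q₀.1⟫ + q₀.2 * ac with hC
    set m := max 0 ((β - C) / ac + 1) with hm
    have hm0 : 0 ≤ m := le_max_left _ _
    have hmem : ((q₀.1, q₀.2 + m) : En n × ℝ) ∈ epiS H := by
      show H q₀.1 ≤ ((q₀.2 + m : ℝ) : EReal)
      exact le_trans hq₀ (EReal.coe_le_coe_iff.mpr (by linarith))
    have h1 := hepiK _ hmem
    rw [hdec] at h1
    have hexp : ⟪u, q₀.1⟫ + (q₀.2 + m) * ac = C + m * ac := by rw [hC]; ring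
    rw [hexp] at h1
    have h2 : m * ac ≤ ((β - C) / ac + 1) * ac :=
      mul_le_mul_of_nonpos_right (le_max_right _ _) (le_of_lt hneg)
    have h3 : ((β - C) / ac + 1) * ac = (β - C) + ac := by
      rw [add_mul, div_mul_cancel₀ _ (ne_of_lt hneg), one_mul]
    linarith
  · -- ac = 0
    have hdomb : ∀ p : En n, H p ≠ ⊤ → β < ⟪u, p⟫ := by
      intro p hne
      have hex : ∃ s : ℝ, H p ≤ (s : EReal) := by
        rcases ereal_cases (H p) with h | ⟨b, h⟩ | h
        · exact ⟨0, by rw [h]; exact bot_le⟩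
        · exact ⟨b, le_of_eq h⟩
        · exact absurd h hne
      obtain ⟨s, hs⟩ := hex
      have h1 := hepiK (p, s) hs
      rw [hdec, hzero] at h1
      simpa using h1
    have hβy : ⟪u, y⟫ < β := by
      rw [hzero] at hpt; simpa using hpt
    set k := max 0 ((c - ⟪y, x⟫ + r) / (β - ⟪u, y⟫) + 1) with hk
    have hk0 : 0 ≤ k := le_max_left _ _
    have hmin : ∀ p, ((⟪x - k • u, p⟫ - (r - k * β) : ℝ) : EReal) ≤ H p := by
      intro p
      by_cases hne : H p = ⊤
      · rw [hne]; exact le_top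
      · have hb := hdomb p hne
        refine le_trans (EReal.coe_le_coe_iff.mpr ?_) (hH p)
        have hin : ⟪x - k • u, p⟫ = ⟪p, x⟫ - k * ⟪u, p⟫ := by
          rw [inner_sub_left, real_inner_smul_left, real_inner_comm x p]
        rw [hin]
        have h5 : k * β ≤ k * ⟪u, p⟫ := mul_le_mul_of_nonneg_left (le_of_lt hb) hk0
        linarith
    have hconj : conjF H (x - k • u) ≤ ((r - k * β : ℝ) : EReal) := conjF_le_iff.mpr hmin
    have hlow : ((⟪y, x - k • u⟫ - (r - k * β) : ℝ) : EReal) ≤ conjF (conjF H) y := by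
      refine le_trans ?_ (young (conjF H) y (x - k • u))
      rw [EReal.coe_sub]
      exact EReal.sub_le_sub le_rfl hconj
    have hval : c < ⟪y, x - k • u⟫ - (r - k * β) := by
      have hin : ⟪y, x - k • u⟫ = ⟪y, x⟫ - k * ⟪u, y⟫ := by
        rw [inner_sub_right, real_inner_smul_right, ← real_inner_comm u y]
      rw [hin]
      have hd : 0 < β - ⟪u, y⟫ := by linarith
      have hge : (c - ⟪y, x⟫ + r) / (β - ⟪u, y⟫) + 1 ≤ k := le_max_right _ _
      have h2 : ((c - ⟪y, x⟫ + r) / (β - ⟪u, y⟫) + 1) * (β - ⟪u, y⟫) ≤ k * (β - ⟪u, y⟫) :=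
        mul_le_mul_of_nonneg_right hge (le_of_lt hd)
      have h3 : ((c - ⟪y, x⟫ + r) / (β - ⟪u, y⟫) + 1) * (β - ⟪u, y⟫)
          = (c - ⟪y, x⟫ + r) + (β - ⟪u, y⟫) := by
        rw [add_mul, div_mul_cancel₀ _ (ne_of_gt hd), one_mul]
      nlinarith
    have hlt := lt_of_lt_of_le (EReal.coe_lt_coe_iff.mpr hval) hlow
    exact absurd hc (not_lt.mpr (le_of_lt hlt))
  · -- ac > 0
    set v := -(ac⁻¹) • u with hv
    set d := -(β / ac) with hd
    have hmin : ∀ p, ((⟪v, p⟫ - d : ℝ) : EReal) ≤ H p := by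
      intro p
      have hvp : ⟪v, p⟫ = -(ac⁻¹) * ⟪u, p⟫ := by
        rw [hv]; exact real_inner_smul_left _ _ _
      rcases ereal_cases (H p) with h | ⟨b, h⟩ | h
      · exfalso
        set s := (β - ⟪u, p⟫) / ac - 1 with hs
        have hmem : ((p, s) : En n × ℝ) ∈ epiS H := by
          show H p ≤ ((s : ℝ) : EReal)
          rw [h]; exact bot_le
        have h1 := hepiK _ hmem
        rw [hdec] at h1
        have h2 : s * ac = β - ⟪u, p⟫ - ac := by
          rw [hs, sub_mul, div_mul_cancel₀ _ (ne_of_gt hpos), one_mul]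
        nlinarith
      · have hmem : ((p, b) : En n × ℝ) ∈ epiS H := by
          show H p ≤ ((b : ℝ) : EReal)
          rw [h]
        have h1 := hepiK _ hmem
        rw [hdec] at h1
        rw [h, EReal.coe_le_coe_iff, hvp, hd]
        have hcalc : -(ac⁻¹) * ⟪u, p⟫ - -(β / ac) = (β - ⟪u, p⟫) / ac := by
          rw [sub_div, div_eq_inv_mul, div_eq_inv_mul]
          ring
        rw [hcalc, div_le_iff₀ hpos]
        linarith
      · rw [h]; exact le_top
    have hconj : conjF H v ≤ (d : EReal) := conjF_le_iff.mpr hmin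
    have hlow : ((⟪y, v⟫ - d : ℝ) : EReal) ≤ conjF (conjF H) y := by
      refine le_trans ?_ (young (conjF H) y v)
      rw [EReal.coe_sub]
      exact EReal.sub_le_sub le_rfl hconj
    have hval : c < ⟪y, v⟫ - d := by
      have h2 : ⟪y, v⟫ = -(ac⁻¹) * ⟪u, y⟫ := by
        rw [hv, real_inner_smul_right, ← real_inner_comm u y]
      have h3 : ⟪y, v⟫ - d = (β - ⟪u, y⟫) / ac := by
        rw [h2, hd, sub_div, div_eq_inv_mul, div_eq_inv_mul]
        ring
      rw [h3, lt_div_iff₀ hpos]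
      linarith
    have hlt := lt_of_lt_of_le (EReal.coe_lt_coe_iff.mpr hval) hlow
    exact absurd hc (not_lt.mpr (le_of_lt hlt))

end Chunk6


section Chunk7

set_option maxHeartbeats 2000000 in
lemma hard_subset {n : ℕ} {T : Type*} (f : T → En n → EReal) (x : En n)
    (hbi : ∀ z, conjF (conjF (fun w => ⨆ t, f t w)) z = ⨆ t, conjF (conjF (f t)) z)
    {ε : ℝ}
    (hinf : (⨅ y, (conjF (fun w => ⨆ t, f t w) y + (⨆ t, f t x) - ((⟪y, x⟫ : ℝ) : EReal)))
      < (ε : EReal)) :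
    eSub (fun w => ⨆ t, f t w) ε x ⊆ closure (Dset f x ε true true) := by
  classical
  intro y₀ hy₀
  obtain ⟨r, hr, hzineq⟩ := hy₀
  have hbound : conjF (fun w => ⨆ t, f t w) y₀ ≤ ((⟪y₀, x⟫ - r + ε : ℝ) : EReal) := by
    obtain ⟨r', hr', h⟩ := mem_eSub_iff.mp
      (show y₀ ∈ eSub (fun w => ⨆ t, f t w) ε x from ⟨r, hr, hzineq⟩)
    have hr2 : (⨆ t, f t x) = ((r : ℝ) : EReal) := hr
    have hrr : r' = r := by rw [hr2] at hr'; exact_mod_cast hr'.symm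
    rwa [hrr] at h
  set F : En n → EReal := fun w => ⨆ t, f t w with hF
  set H : En n → EReal := fun p => ⨅ t, conjF (f t) p with hHdef
  have hTne : Nonempty T := by
    by_contra hTe
    rw [not_nonempty_iff] at hTe
    have h0 : F x = ⊥ := iSup_of_empty _
    rw [hr] at h0
    exact EReal.coe_ne_bot _ h0
  have hHc : conjF H = conjF (conjF F) := by
    funext z
    have h1 : conjF H z = ⨆ t, conjF (conjF (f t)) z := conjF_iInf (fun t => conjF (f t)) z
    rw [h1]
    exact (hbi z).symm
  have hH2 : ∀ w₁, conjF (conjF H) w₁ = conjF F w₁ := by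
    intro w₁
    rw [hHc]
    exact triple_conj F w₁
  have hHlb : ∀ p, ((⟪p, x⟫ - r : ℝ) : EReal) ≤ H p := by
    intro p
    refine le_iInf fun t => ?_
    have h1 : f t x ≤ (r : EReal) := by
      rw [← hr]; exact le_iSup (fun t => f t x) t
    have h2 : ((⟪p, x⟫ : ℝ) : EReal) - (r : EReal) ≤ ((⟪p, x⟫ : ℝ) : EReal) - f t x :=
      EReal.sub_le_sub le_rfl h1
    rw [EReal.coe_sub]
    exact h2.trans (young (f t) p x)
  have hinf' := hinf
  rw [iInf_lt_iff] at hinf'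
  obtain ⟨yh, hyh⟩ := hinf'
  have hyhform : conjF F yh + (r : EReal) - ((⟪yh, x⟫ : ℝ) : EReal) < (ε : EReal) := by
    rw [show (⨆ t, f t x) = F x from rfl, hr] at hyh
    exact hyh
  have hyh_lb : ((⟪yh, x⟫ - r : ℝ) : EReal) ≤ conjF F yh := by
    have h1 := young F yh x
    rw [hr] at h1
    rw [EReal.coe_sub]
    exact h1
  have hyh_ne_bot : conjF F yh ≠ ⊥ := fun h => by
    rw [h] at hyh_lb; exact EReal.coe_ne_bot _ (le_bot_iff.mp hyh_lb)
  have hyh_ne_top : conjF F yh ≠ ⊤ := by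
    intro h
    rw [h, EReal.top_add_coe, EReal.top_sub_coe] at hyhform
    exact absurd hyhform (by simp)
  set Ah := (conjF F yh).toReal with hAh
  have hAheq : conjF F yh = (Ah : EReal) := (EReal.coe_toReal hyh_ne_top hyh_ne_bot).symm
  have hAhlt : Ah < ⟪yh, x⟫ - r + ε := by
    rw [hAheq, ← EReal.coe_add, ← EReal.coe_sub, EReal.coe_lt_coe_iff] at hyhform
    linarith
  rw [Metric.mem_closure_iff]
  intro δ hδ
  set s : ℝ := min 1 (δ / (2 * (‖yh - y₀‖ + 1))) with hs
  have hs_pos : 0 < s := lt_min one_pos (by positivity)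
  have hs_le1 : s ≤ 1 := min_le_left _ _
  set ys : En n := y₀ + s • (yh - y₀) with hys
  have hys_dist : dist y₀ ys < δ / 2 := by
    rw [dist_eq_norm]
    have hdiff : y₀ - ys = -(s • (yh - y₀)) := by rw [hys]; abel
    rw [hdiff, norm_neg, norm_smul, Real.norm_eq_abs, abs_of_pos hs_pos]
    have hN : (0 : ℝ) ≤ ‖yh - y₀‖ := norm_nonneg _
    have h1 : s ≤ δ / (2 * (‖yh - y₀‖ + 1)) := min_le_right _ _
    have h2 : s * ‖yh - y₀‖ ≤ δ / (2 * (‖yh - y₀‖ + 1)) * ‖yh - y₀‖ :=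
      mul_le_mul_of_nonneg_right h1 hN
    have h3 : δ / (2 * (‖yh - y₀‖ + 1)) * ‖yh - y₀‖ < δ / 2 := by
      rw [div_mul_eq_mul_div, div_lt_div_iff₀ (by positivity) (by norm_num)]
      nlinarith
    linarith
  set A₀ : ℝ := ⟪y₀, x⟫ - r + ε with hA₀
  set Bs : ℝ := (1 - s) * A₀ + s * Ah with hBs
  set cs : ℝ := ⟪ys, x⟫ - r + ε with hcs
  have hinner_ys : ∀ z : En n, ⟪ys, z⟫ = (1 - s) * ⟪y₀, z⟫ + s * ⟪yh, z⟫ := by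
    intro z
    rw [hys, inner_add_left, real_inner_smul_left, inner_sub_left]
    ring
  have hBslt : Bs < cs := by
    have h1 := hinner_ys x
    have h2 : s * Ah < s * (⟪yh, x⟫ - r + ε) := by
      exact mul_lt_mul_of_pos_left hAhlt hs_pos
    rw [hBs, hcs, h1, hA₀]
    nlinarith
  have hconv : conjF F ys ≤ ((Bs : ℝ) : EReal) := by
    refine iSup_le fun z => ?_
    rcases ereal_cases (F z) with h | ⟨b, h⟩ | h
    · exfalso
      have h1 := hzineq z
      rw [h] at h1
      exact EReal.coe_ne_bot _ (le_bot_iff.mp h1)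
    · rw [h, ← EReal.coe_sub, EReal.coe_le_coe_iff]
      have h0 : ⟪y₀, z⟫ - b ≤ A₀ := by
        have h1 := (conjF_le_iff.mp hbound) z
        rw [h, EReal.coe_le_coe_iff] at h1
        linarith
      have hh : ⟪yh, z⟫ - b ≤ Ah := by
        have h1 := young F yh z
        rw [h, hAheq, ← EReal.coe_sub, EReal.coe_le_coe_iff] at h1
        exact h1
      rw [hinner_ys z, hBs]
      have h5 : (1 - s) * (⟪y₀, z⟫ - b) ≤ (1 - s) * A₀ :=
        mul_le_mul_of_nonneg_left h0 (by linarith)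
      have h6 : s * (⟪yh, z⟫ - b) ≤ s * Ah :=
        mul_le_mul_of_nonneg_left hh (le_of_lt hs_pos)
      nlinarith
    · rw [h, EReal.sub_top]
      exact bot_le
  set c : ℝ := (Bs + cs) / 2 with hc
  have hcBs : Bs < c := by rw [hc]; linarith
  have hccs : c < cs := by rw [hc]; linarith
  have hcc : conjF (conjF H) ys < (c : EReal) := by
    rw [hH2 ys]
    exact lt_of_le_of_lt hconv (EReal.coe_lt_coe_iff.mpr hcBs)
  have hsep := separation_epi H x r hHlb ys c hcc
  set g : ℝ := cs - c with hg
  have hgpos : 0 < g := by rw [hg]; linarith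
  set δ' : ℝ := min (δ / 2) (g / (4 * (‖x‖ + 1))) with hδ'
  have hδ'pos : 0 < δ' := lt_min (by linarith) (by positivity)
  obtain ⟨q, hqhull, hqdist⟩ := Metric.mem_closure_iff.mp hsep δ' hδ'pos
  have hd1 : dist ys q.1 < δ' := by
    have h1 : dist ((ys, c) : En n × ℝ) q = max (dist ys q.1) (dist c q.2) := by
      rw [Prod.dist_eq]
    rw [h1] at hqdist
    exact lt_of_le_of_lt (le_max_left _ _) hqdist
  have hd2 : |c - q.2| < δ' := by
    have h1 : dist ((ys, c) : En n × ℝ) q = max (dist ys q.1) (dist c q.2) := by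
      rw [Prod.dist_eq]
    rw [h1] at hqdist
    have := lt_of_le_of_lt (le_max_right _ _) hqdist
    rwa [Real.dist_eq] at this
  -- key strict inequality at the approximating point
  have hkey : q.2 + g / 4 < ⟪q.1, x⟫ - r + ε := by
    have hip : |⟪ys, x⟫ - ⟪q.1, x⟫| ≤ ‖ys - q.1‖ * ‖x‖ := by
      rw [← inner_sub_left]
      exact abs_real_inner_le_norm _ _
    have hnd : ‖ys - q.1‖ = dist ys q.1 := (dist_eq_norm _ _).symm
    have h2 : ‖ys - q.1‖ * ‖x‖ ≤ δ' * ‖x‖ := by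
      rw [hnd]
      exact mul_le_mul_of_nonneg_right (le_of_lt hd1) (norm_nonneg _)
    have h3 : δ' * ‖x‖ ≤ g / 4 := by
      have h4 : δ' ≤ g / (4 * (‖x‖ + 1)) := min_le_right _ _
      have h5 : δ' * ‖x‖ ≤ g / (4 * (‖x‖ + 1)) * ‖x‖ :=
        mul_le_mul_of_nonneg_right h4 (norm_nonneg _)
      have h6 : g / (4 * (‖x‖ + 1)) * ‖x‖ ≤ g / 4 := by
        rw [div_mul_eq_mul_div, div_le_div_iff₀ (by positivity) (by norm_num)]
        nlinarith [norm_nonneg x, hgpos]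
      linarith
    have h7 : δ' ≤ g / 4 := by
      have h4 : δ' ≤ g / (4 * (‖x‖ + 1)) := min_le_right _ _
      have h8 : g / (4 * (‖x‖ + 1)) ≤ g / 4 := by
        apply div_le_div_of_nonneg_left (le_of_lt hgpos) (by norm_num)
        nlinarith [norm_nonneg x]
      linarith
    have habs := abs_lt.mp hd2
    have habs2 := abs_le.mp hip
    rw [hcs] at hccs
    -- c + g = cs = ⟪ys,x⟫ - r + ε ; q.2 < c + δ' ; ⟪q.1,x⟫ ≥ ⟪ys,x⟫ - g/4
    have : cs = c + g := by rw [hg]; ring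
    rw [hcs] at this
    linarith
  -- extract a convex combination
  rw [convexHull_eq] at hqhull
  obtain ⟨ι', tf, wf, zf, hwf0, hwf1, hzf, hcm⟩ := hqhull
  rw [Finset.centerMass_eq_of_sum_1 _ _ hwf1] at hcm
  have hfst : ∑ i ∈ tf, wf i • (zf i).1 = q.1 := by
    have h1 := congrArg Prod.fst hcm
    rw [Prod.fst_sum] at h1
    simpa using h1
  have hsnd : ∑ i ∈ tf, wf i * (zf i).2 = q.2 := by
    have h1 := congrArg Prod.snd hcm
    rw [Prod.snd_sum] at h1
    simpa [smul_eq_mul] using h1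
  set tp := tf.filter (fun i => 0 < wf i) with htp
  have hzoff : ∀ i ∈ tf, ¬(0 < wf i) → wf i = 0 := fun i hi hn =>
    le_antisymm (not_lt.mp hn) (hwf0 i hi)
  have htrans : ∀ {M : Type} [AddCommMonoid M] (G : ι' → M),
      (∀ i ∈ tf, wf i = 0 → G i = 0) → ∑ i ∈ tp, G i = ∑ i ∈ tf, G i := by
    intro M _ G hG
    refine Finset.sum_filter_of_ne fun i hi hne => ?_
    by_contra hnp
    exact hne (hG i hi (hzoff i hi hnp))
  have hw1' : ∑ i ∈ tp, wf i = 1 := by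
    rw [htrans wf (fun i _ h => h)]; exact hwf1
  have hq1 : ∑ i ∈ tp, wf i • (zf i).1 = q.1 := by
    rw [htrans (fun i => wf i • (zf i).1) (fun i _ h => by simp [h])]
    exact hfst
  have hq2 : ∑ i ∈ tp, wf i * (zf i).2 = q.2 := by
    rw [htrans (fun i => wf i * (zf i).2) (fun i _ h => by simp [h])]
    exact hsnd
  -- choose indices t_i
  have hchoice : ∀ i : ι', ∃ tt : T,
      i ∈ tp → conjF (f tt) (zf i).1 < (((zf i).2 + g / 4 : ℝ) : EReal) := by
    intro i
    by_cases hi : i ∈ tp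
    · have hepi : H (zf i).1 ≤ (((zf i).2 : ℝ) : EReal) := hzf i (Finset.mem_of_mem_filter i hi)
      have hlt : H (zf i).1 < (((zf i).2 + g / 4 : ℝ) : EReal) :=
        lt_of_le_of_lt hepi (EReal.coe_lt_coe_iff.mpr (by linarith))
      simp only [hHdef] at hlt
      obtain ⟨tt, htt⟩ := iInf_lt_iff.mp hlt
      exact ⟨tt, fun _ => htt⟩
    · exact ⟨Classical.arbitrary T, fun h => absurd h hi⟩
  choose τ hτ using hchoice
  set ρ : ι' → ℝ := fun i => (f (τ i) x).toReal with hρdef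
  have hρ : ∀ i ∈ tp, f (τ i) x = ((ρ i : ℝ) : EReal) := by
    intro i hi
    have hnt : f (τ i) x ≠ ⊤ := by
      intro htop
      have h1 : f (τ i) x ≤ (r : EReal) := by rw [← hr]; exact le_iSup (fun t => f t x) (τ i)
      rw [htop] at h1
      exact EReal.coe_ne_top r (top_le_iff.mp h1)
    have hnb : f (τ i) x ≠ ⊥ := by
      intro hbot
      have h2 : ((⟪(zf i).1, x⟫ : ℝ) : EReal) - f (τ i) x ≤ conjF (f (τ i)) (zf i).1 :=
        young _ _ x
      have h4 : ((⟪(zf i).1, x⟫ : ℝ) : EReal) - (⊥ : EReal) = ⊤ := by simp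
      rw [hbot, h4] at h2
      have h5 := lt_of_le_of_lt h2 (hτ i hi)
      exact absurd h5 (by simp)
    exact (EReal.coe_toReal hnt hnb).symm
  set η : ι' → ℝ := fun i => (zf i).2 + g / 4 + ρ i - ⟪(zf i).1, x⟫ with hη
  have hηnn : ∀ i ∈ tp, 0 ≤ η i := by
    intro i hi
    have h2 : ((⟪(zf i).1, x⟫ : ℝ) : EReal) - f (τ i) x ≤ conjF (f (τ i)) (zf i).1 :=
      young _ _ x
    rw [hρ i hi, ← EReal.coe_sub] at h2
    have h3 := lt_of_le_of_lt h2 (hτ i hi)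
    rw [EReal.coe_lt_coe_iff] at h3
    simp only [hη]
    linarith
  have hηmem : ∀ i ∈ tp, (zf i).1 ∈ eSub (f (τ i)) (η i) x := by
    intro i hi
    refine ⟨ρ i, hρ i hi, fun z => ?_⟩
    have h1 := conjF_le_iff.mp (le_of_lt (hτ i hi)) z
    have h2 : (⟪(zf i).1, z - x⟫ + ρ i - η i : ℝ)
        = ⟪(zf i).1, z⟫ - ((zf i).2 + g / 4) := by
      simp only [hη]
      rw [inner_sub_right]
      ring
    rw [h2]
    exact h1
  set scost : ι' → ℝ := fun i => (zf i).2 + g / 4 - ⟪(zf i).1, x⟫ with hscost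
  have hcost_sum : ∑ i ∈ tp, wf i * scost i < ε - r := by
    have e1 : ∑ i ∈ tp, wf i * scost i
        = (∑ i ∈ tp, wf i * (zf i).2) + (g / 4) * (∑ i ∈ tp, wf i)
          - ∑ i ∈ tp, wf i * ⟪(zf i).1, x⟫ := by
      rw [Finset.mul_sum, ← Finset.sum_add_distrib, ← Finset.sum_sub_distrib]
      refine Finset.sum_congr rfl fun i _ => ?_
      simp only [hscost]
      ring
    have e2 : ∑ i ∈ tp, wf i * ⟪(zf i).1, x⟫ = ⟪q.1, x⟫ := by
      rw [← hq1, sum_inner]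
      exact Finset.sum_congr rfl fun i _ => (real_inner_smul_left _ _ _).symm
    rw [e1, e2, hq2, hw1', mul_one]
    linarith
  obtain ⟨J, w2, hJsub, hJcard, hw2nn, hw21, hw2p, hw2s⟩ :=
    carath_descent (fun i => (zf i).1) scost tp wf
      (fun i hi => le_of_lt ((Finset.mem_filter.mp hi).2)) hw1'
  set Jp := J.filter (fun i => 0 < w2 i) with hJp
  have hzoff2 : ∀ i ∈ J, ¬(0 < w2 i) → w2 i = 0 := fun i hi hn =>
    le_antisymm (not_lt.mp hn) (hw2nn i hi)
  have htrans2 : ∀ {M : Type} [AddCommMonoid M] (G : ι' → M),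
      (∀ i ∈ J, w2 i = 0 → G i = 0) → ∑ i ∈ Jp, G i = ∑ i ∈ J, G i := by
    intro M _ G hG
    refine Finset.sum_filter_of_ne fun i hi hne => ?_
    by_contra hnp
    exact hne (hG i hi (hzoff2 i hi hnp))
  have hJp_sub_tp : Jp ⊆ tp := (Finset.filter_subset _ _).trans hJsub
  have hw21' : ∑ i ∈ Jp, w2 i = 1 := by
    rw [htrans2 w2 (fun i _ h => h)]; exact hw21
  have hsum_p : ∑ i ∈ Jp, w2 i • (zf i).1 = q.1 := by
    rw [htrans2 (fun i => w2 i • (zf i).1) (fun i _ h => by simp [h])]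
    rw [hw2p, hq1]
  have hcost2 : ∑ i ∈ Jp, w2 i * scost i < ε - r := by
    rw [htrans2 (fun i => w2 i * scost i) (fun i _ h => by simp [h])]
    exact lt_of_le_of_lt hw2s hcost_sum
  have hB : r + (∑ i ∈ Jp, w2 i * η i) - ε < ∑ i ∈ Jp, w2 i * ρ i := by
    have hA1 : (∑ i ∈ Jp, w2 i * η i) - (∑ i ∈ Jp, w2 i * ρ i)
        = ∑ i ∈ Jp, w2 i * scost i := by
      rw [← Finset.sum_sub_distrib]
      refine Finset.sum_congr rfl fun i _ => ?_
      simp only [hη, hscost]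
      ring
    linarith
  have hmemD := comb_mem_Dset f x ε r Jp w2 τ (fun i => (zf i).1) η ρ
    (fun i hi => (Finset.mem_filter.mp hi).2) hw21'
    (le_trans (Finset.card_filter_le _ _) hJcard)
    (fun i hi => hηnn i (hJp_sub_tp hi))
    (fun i hi => hηmem i (hJp_sub_tp hi))
    (fun i hi => hρ i (hJp_sub_tp hi))
    hr hB
  refine ⟨q.1, ?_, ?_⟩
  · rw [← hsum_p]
    exact hmemD
  · calc dist y₀ q.1 ≤ dist y₀ ys + dist ys q.1 := dist_triangle _ _ _
      _ < δ / 2 + δ / 2 := by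
          have := lt_of_lt_of_le hd1 (min_le_left _ _)
          exact add_lt_add hys_dist this
      _ = δ := by ring

end Chunk7


section Chunk8

lemma inf_le_of_mem {n : ℕ} {T : Type*} (f : T → En n → EReal) (x : En n) {ε : ℝ} {y : En n}
    (hy : y ∈ eSub (fun w => ⨆ t, f t w) ε x) :
    (⨅ y', (conjF (fun w => ⨆ t, f t w) y' + (⨆ t, f t x) - ((⟪y', x⟫ : ℝ) : EReal)))
      ≤ (ε : EReal) := by
  obtain ⟨r, hr, hz⟩ := hy
  have hb : conjF (fun w => ⨆ t, f t w) y ≤ ((⟪y, x⟫ - r + ε : ℝ) : EReal) := by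
    obtain ⟨r', hr', h⟩ := mem_eSub_iff.mp
      (show y ∈ eSub (fun w => ⨆ t, f t w) ε x from ⟨r, hr, hz⟩)
    have hr2 : (⨆ t, f t x) = ((r : ℝ) : EReal) := hr
    have hrr : r' = r := by rw [hr2] at hr'; exact_mod_cast hr'.symm
    rwa [hrr] at h
  refine le_trans (iInf_le _ y) ?_
  have hr2 : (⨆ t, f t x) = ((r : ℝ) : EReal) := hr
  rw [hr2]
  have h1 : conjF (fun w => ⨆ t, f t w) y + ((r : ℝ) : EReal)
      ≤ ((⟪y, x⟫ - r + ε + r : ℝ) : EReal) := by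
    rw [EReal.coe_add]
    exact add_le_add_left hb _
  have h2 : conjF (fun w => ⨆ t, f t w) y + ((r : ℝ) : EReal) - ((⟪y, x⟫ : ℝ) : EReal)
      ≤ ((⟪y, x⟫ - r + ε + r - ⟪y, x⟫ : ℝ) : EReal) := by
    rw [EReal.coe_sub]
    exact EReal.sub_le_sub h1 le_rfl
  have h3 : (⟪y, x⟫ - r + ε + r - ⟪y, x⟫ : ℝ) = ε := by ring
  rwa [h3] at h2

end Chunk8


/-- representation of `∂_ε f(x)` for `f = sup_t f_t` with
`f** = sup_t f_t**`: if `ε > inf_y (f*(y) + f(x) − ⟨y,x⟩)` then `∂_ε f(x)` is the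
closure of the set of the above convex combinations (with strict inequality and
bound `ε`); consequently for every `ε ≥ 0`, `∂_ε f(x) = ⋂_{γ>ε} cl(...)` (with
non-strict inequality and bound `γ`); in both formulas one may restrict to `λ`
with `#supp λ ≤ min (n+1) (#T)`. -/
theorem statement7 {n : ℕ} {T : Type*} (f : T → En n → EReal) (x : En n)
    (hbi : ∀ z, conjF (conjF (fun w => ⨆ t, f t w)) z = ⨆ t, conjF (conjF (f t)) z) :
    (∀ ε : ℝ,
      (⨅ y, (conjF (fun w => ⨆ t, f t w) y + (⨆ t, f t x) - ((⟪y, x⟫ : ℝ) : EReal)))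
          < (ε : EReal) →
      (eSub (fun w => ⨆ t, f t w) ε x = closure (Dset f x ε true false) ∧
       eSub (fun w => ⨆ t, f t w) ε x = closure (Dset f x ε true true))) ∧
    (∀ ε : ℝ, 0 ≤ ε →
      (eSub (fun w => ⨆ t, f t w) ε x = ⋂ γ > ε, closure (Dset f x γ false false) ∧
       eSub (fun w => ⨆ t, f t w) ε x = ⋂ γ > ε, closure (Dset f x γ false true))) := by
  constructor
  · intro ε hε
    have hhard := hard_subset f x hbi hε
    have heasyF : closure (Dset f x ε true false) ⊆ eSub (fun w => ⨆ t, f t w) ε x :=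
      closure_minimal (Dset_subset_eSub f x ε true false) (isClosed_eSub _ _ _)
    have heasyT : closure (Dset f x ε true true) ⊆ eSub (fun w => ⨆ t, f t w) ε x :=
      closure_minimal (Dset_subset_eSub f x ε true true) (isClosed_eSub _ _ _)
    have hTF : closure (Dset f x ε true true) ⊆ closure (Dset f x ε true false) :=
      closure_mono (Dset_mono_restricted f x ε true)
    exact ⟨Set.Subset.antisymm (hhard.trans hTF) heasyF, Set.Subset.antisymm hhard heasyT⟩
  · intro ε _
    have key : ∀ b : Bool, eSub (fun w => ⨆ t, f t w) ε x
        = ⋂ γ > ε, closure (Dset f x γ false b) := by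
      intro b
      apply Set.Subset.antisymm
      · intro y hy
        rw [Set.mem_iInter₂]
        intro γ hγ
        have hm : (⨅ y', (conjF (fun w => ⨆ t, f t w) y' + (⨆ t, f t x)
            - ((⟪y', x⟫ : ℝ) : EReal))) < (γ : EReal) :=
          lt_of_le_of_lt (inf_le_of_mem f x hy) (EReal.coe_lt_coe_iff.mpr hγ)
        have h1 : y ∈ eSub (fun w => ⨆ t, f t w) γ x := eSub_mono (le_of_lt hγ) x hy
        have h2 := hard_subset f x hbi hm h1
        refine closure_mono ?_ h2
        cases b
        · exact (Dset_mono_strict f x γ true).trans (Dset_mono_restricted f x γ false)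
        · exact Dset_mono_strict f x γ true
      · intro y hy
        refine eSub_of_forall_gt fun γ hγ => ?_
        have h1 := Set.mem_iInter₂.mp hy γ hγ
        exact (closure_minimal (Dset_subset_eSub f x γ false b) (isClosed_eSub _ _ _)) h1
    exact ⟨key false, key true⟩
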